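/- arXiv:2205.15275 — 6 statements merged into one kernel-verified Lean document; each statement's English description precedes it below -/
import Mathlib

section
/- Let M be the sublattice of ℝ^op × ℝ given as the convex hull of two parallel lines l₀ and l₁ of slope −1 (with l₁ above l₀). Then the map T : M → M characterized by the incidence conditions (for u ∈ M with h the horizontal line through u, g₀ the vertical line through u, h₁ the horizontal line through T(u), g₁ the vertical line through T(u): the lines l₀, h, g₁ meet in a common point, and the lines l₁, g₀, h₁ meet in a common point) is a well-defined order-preserving automorphism of the poset M. -/
open CategoryTheory CategoryTheory.Limits Opposite

noncomputable section

/-- The strip `M ⊂ ℝᵒᵖ × ℝ` between the two lines of slope `-1` given by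
`x + y = a` and `x + y = b`. -/
def Strip (a b : ℝ) : Type := {p : ℝ × ℝ // a ≤ p.1 + p.2 ∧ p.1 + p.2 ≤ b}

namespace Strip

variable {a b : ℝ}

/-- The partial order inherited from `ℝᵒᵖ × ℝ`. -/
instance : PartialOrder (Strip a b) where
  le p q := q.1.1 ≤ p.1.1 ∧ p.1.2 ≤ q.1.2
  le_refl p := ⟨le_rfl, le_rfl⟩
  le_trans p q r h h' := ⟨le_trans h'.1 h.1, le_trans h.2 h'.2⟩
  le_antisymm p q h h' :=
    Subtype.ext (Prod.ext (le_antisymm h'.1 h.1) (le_antisymm h.2 h'.2))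

lemma le_def {p q : Strip a b} : p ≤ q ↔ q.1.1 ≤ p.1.1 ∧ p.1.2 ≤ q.1.2 := Iff.rfl

/-- The glide reflection `T`. -/
def glide (p : Strip a b) : Strip a b :=
  ⟨(a - p.1.2, b - p.1.1), by
    obtain ⟨h1, h2⟩ := p.2; constructor <;> dsimp <;> linarith⟩

/-- The glide reflection `T` as an order isomorphism of `M`. -/
def glideEquiv : Strip a b ≃o Strip a b where
  toFun := glide
  invFun p := ⟨(b - p.1.2, a - p.1.1), by
    obtain ⟨h1, h2⟩ := p.2; constructor <;> dsimp <;> linarith⟩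
  left_inv p := Subtype.ext (by simp [glide])
  right_inv p := Subtype.ext (by simp [glide])
  map_rel_iff' {p q} := by
    show (glide p ≤ glide q) ↔ _
    simp only [le_def, glide]
    constructor <;> rintro ⟨h1, h2⟩ <;> exact ⟨by linarith, by linarith⟩

lemma glideEquiv_coords (p : Strip a b) :
    (glideEquiv p).1 = (a - p.1.2, b - p.1.1) := rfl

lemma glideEquiv_symm_coords (p : Strip a b) :
    (glideEquiv.symm p).1 = (b - p.1.2, a - p.1.1) := rfl

/-- The boundary `∂M = l₀ ∪ l₁`. -/
def OnBoundary (p : Strip a b) : Prop := p.1.1 + p.1.2 = a ∨ p.1.1 + p.1.2 = b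

/-- The interior `int M`. -/
def InInterior (p : Strip a b) : Prop := a < p.1.1 + p.1.2 ∧ p.1.1 + p.1.2 < b

/-- `u` belongs to `(↓v) ∩ int(↑ T⁻¹ v)`, the support of the contravariant block `B_v`;
equivalently, `v ∈ (↑u) ∩ int(↓ T u)`. -/
def BlockCond (v u : Strip a b) : Prop :=
  u ≤ v ∧ u.1.1 < b - v.1.2 ∧ a - v.1.1 < u.1.2

lemma blockCond_convex {v u u' u'' : Strip a b} (h1 : u ≤ u') (h2 : u' ≤ u'')
    (hu : BlockCond v u) (hu'' : BlockCond v u'') : BlockCond v u' :=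
  ⟨le_trans h2 hu''.1, lt_of_le_of_lt h1.1 hu.2.1, lt_of_lt_of_le hu.2.2 h1.2⟩

lemma simpleCond_convex {w u u' u'' : Strip a b} (h1 : u ≤ u') (h2 : u' ≤ u'')
    (hu : u = w) (hu'' : u'' = w) : u' = w :=
  le_antisymm (hu'' ▸ h2) (hu ▸ h1)

variable (a b) in
/-- An axis-aligned rectangle in `M` with corners `u ≤ v ≤ w` and remaining corner on `l₁`. -/
def IsCohomRect (u v w : Strip a b) : Prop :=
  u ≤ v ∧ v ≤ w ∧
    ((v.1.1 = u.1.1 ∧ v.1.2 = w.1.2 ∧ w.1.1 + u.1.2 = b) ∨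
     (v.1.1 = w.1.1 ∧ v.1.2 = u.1.2 ∧ u.1.1 + w.1.2 = b))

lemma IsCohomRect.w_le_glide {u v w : Strip a b} (h : IsCohomRect a b u v w) :
    w ≤ glideEquiv u := by
  obtain ⟨h1, h2, h3⟩ := h
  have hu := u.2; have hv := v.2; have hw := w.2
  obtain ⟨hle1, hle2⟩ := h1; obtain ⟨hle3, hle4⟩ := h2
  rw [le_def]
  rcases h3 with ⟨e1, e2, e3⟩ | ⟨e1, e2, e3⟩ <;>
    exact ⟨by rw [glideEquiv_coords]; dsimp; linarith,
           by rw [glideEquiv_coords]; dsimp; linarith⟩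

lemma IsCohomRect.glideInv_le {u v w : Strip a b} (h : IsCohomRect a b u v w) :
    glideEquiv.symm w ≤ u := by
  have := h.w_le_glide
  have h2 := glideEquiv.symm.monotone this
  simpa using h2

end Strip

section Functors

open Strip

variable (a b : ℝ) (K : Type) [Field K]

attribute [local instance] Classical.propDecidable

/-- auxiliary linear map used for the internal maps of `condFunctor`. -/
def condMap (P : Strip a b → Prop) (u u' : Strip a b) :
    ((PLift (P u') → K) →ₗ[K] (PLift (P u) → K)) where
  toFun f _ := if h' : P u' then f ⟨h'⟩ else 0
  map_add' f g := by funext h; by_cases h' : P u' <;> simp [h']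
  map_smul' c f := by funext h; by_cases h' : P u' <;> simp [h']

@[simp] lemma condMap_apply (P : Strip a b → Prop) (u u' : Strip a b)
    (f : PLift (P u') → K) (h : PLift (P u)) :
    condMap a b K P u u' f h = if h' : P u' then f ⟨h'⟩ else 0 := rfl

/-- A functor `Mᵒᵖ ⥤ Vect_K` supported on the set of points satisfying `P`,
with internal maps the identity wherever possible.  Both the contravariant blocks `B_v`
and the simple functors `S_w` arise this way. -/
def condFunctor (P : Strip a b → Prop)
    (hconv : ∀ ⦃u u' u'' : Strip a b⦄, u ≤ u' → u' ≤ u'' → P u → P u'' → P u') :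
    (Strip a b)ᵒᵖ ⥤ ModuleCat K where
  obj u := ModuleCat.of K (PLift (P u.unop) → K)
  map {x y} f := ModuleCat.ofHom (condMap a b K P y.unop x.unop)
  map_id x := by
    refine ModuleCat.hom_ext (LinearMap.ext fun f => ?_)
    funext h
    show (if h' : P x.unop then f ⟨h'⟩ else 0) = f h
    rw [dif_pos h.down]
  map_comp {x y z} f g := by
    refine ModuleCat.hom_ext (LinearMap.ext fun v => ?_)
    funext h
    show (if h' : P x.unop then v ⟨h'⟩ else 0)
        = condMap a b K P z.unop y.unop (condMap a b K P y.unop x.unop v) h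
    by_cases hx : P x.unop
    · have hy : P y.unop := hconv (leOfHom g.unop) (leOfHom f.unop) h.down hx
      simp [hx, hy]
    · by_cases hy : P y.unop <;> simp [hx, hy]

/-- The contravariant block `B_v`. -/
def Block (v : Strip a b) : (Strip a b)ᵒᵖ ⥤ ModuleCat K :=
  condFunctor a b K (BlockCond v) (fun _ _ _ h1 h2 hu hu'' => blockCond_convex h1 h2 hu hu'')

/-- The simple functor `S_w`. -/
def SimpleF (w : Strip a b) : (Strip a b)ᵒᵖ ⥤ ModuleCat K :=
  condFunctor a b K (fun u => u = w) (fun _ _ _ h1 h2 hu hu'' => simpleCond_convex h1 h2 hu hu'')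

variable {a b K}

/-- The structure map `G(y) → G(x)` of a functor, for `x ≤ y` in `M`. -/
def seqMap (G : (Strip a b)ᵒᵖ ⥤ ModuleCat K) {x y : Strip a b} (h : x ≤ y) :
    G.obj (op y) ⟶ G.obj (op x) :=
  G.map (homOfLE h).op

variable (a b K)

/-- Pointwise finite-dimensionality. -/
def Pfd (G : (Strip a b)ᵒᵖ ⥤ ModuleCat K) : Prop :=
  ∀ u : Strip a b, FiniteDimensional K (G.obj (op u))

/-- Vanishing on the boundary `∂M`. -/
def VanishesOnBoundary (G : (Strip a b)ᵒᵖ ⥤ ModuleCat K) : Prop :=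
  ∀ u : Strip a b, OnBoundary u → ∀ x : G.obj (op u), x = 0

/-- Sequential continuity: for every increasing sequence `u_k` converging to `L`, the
natural map `G L → lim_k G (u k)` is an isomorphism; elementarily, every compatible
family lifts uniquely. -/
def SeqContinuousF (G : (Strip a b)ᵒᵖ ⥤ ModuleCat K) : Prop :=
  ∀ (u : ℕ → Strip a b) (hu : Monotone u) (L : Strip a b) (hle : ∀ k, u k ≤ L),
    Filter.Tendsto (fun k => (u k).1) Filter.atTop (nhds L.1) →
    ∀ x : ∀ k, G.obj (op (u k)),
      (∀ k, seqMap G (hu (Nat.le_succ k)) (x (k + 1)) = x k) →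
      ∃! y : G.obj (op L), ∀ k, seqMap G (hle k) y = x k

/-- Cohomologicality: the long sequences associated to axis-aligned rectangles with one
corner on `l₁` are exact. -/
def Cohomological (G : (Strip a b)ᵒᵖ ⥤ ModuleCat K) : Prop :=
  VanishesOnBoundary a b K G ∧
  ∀ (u v w : Strip a b) (h : IsCohomRect a b u v w) (n : ℤ),
    (Function.Exact
        (seqMap G (((glideEquiv ^ n : Strip a b ≃o Strip a b)).monotone h.w_le_glide))
        (seqMap G (((glideEquiv ^ n : Strip a b ≃o Strip a b)).monotone h.2.1))) ∧
    (Function.Exact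
        (seqMap G (((glideEquiv ^ n : Strip a b ≃o Strip a b)).monotone h.2.1))
        (seqMap G (((glideEquiv ^ n : Strip a b ≃o Strip a b)).monotone h.1))) ∧
    (Function.Exact
        (seqMap G (((glideEquiv ^ n : Strip a b ≃o Strip a b)).monotone h.1))
        (seqMap G (((glideEquiv ^ n : Strip a b ≃o Strip a b)).monotone h.glideInv_le)))

/-- Bounded above support: the support is contained in the downset `{y - x ≤ c}`. -/
def BddAboveSupport (G : (Strip a b)ᵒᵖ ⥤ ModuleCat K) : Prop :=
  ∃ c : ℝ, ∀ u : Strip a b, c < u.1.2 - u.1.1 → ∀ x : G.obj (op u), x = 0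

/-- Membership in the category `𝒥` of pfd, cohomological, sequentially continuous functors
with bounded above support. -/
def MemJ (G : (Strip a b)ᵒᵖ ⥤ ModuleCat K) : Prop :=
  Pfd a b K G ∧ Cohomological a b K G ∧ SeqContinuousF a b K G ∧ BddAboveSupport a b K G

/-- `𝒥`-presentability. -/
def JPresentable (G : (Strip a b)ᵒᵖ ⥤ ModuleCat K) : Prop :=
  ∃ (H P : (Strip a b)ᵒᵖ ⥤ ModuleCat K) (_ : MemJ a b K H) (_ : MemJ a b K P)
    (f : H ⟶ P) (g : P ⟶ G),
      (∀ u : (Strip a b)ᵒᵖ, Function.Exact (f.app u) (g.app u)) ∧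
      (∀ u : (Strip a b)ᵒᵖ, Function.Surjective (g.app u))

/-- The 0-th Betti function `β⁰(G) : int M → ℕ`, `u ↦ dim Nat(G, S_u)`. -/
def beta0 (G : (Strip a b)ᵒᵖ ⥤ ModuleCat K) (v : Strip a b) : ℕ :=
  if InInterior v then Module.finrank K (G ⟶ SimpleF a b K v) else 0

/-- Admissible Betti functions. -/
def AdmissibleBetti (β : Strip a b → ℕ) : Prop :=
  (∀ v, ¬ InInterior v → β v = 0) ∧
  (∃ c : ℝ, ∀ v : Strip a b, c < v.1.2 - v.1.1 → β v = 0) ∧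
  (∀ u : Strip a b, {v : Strip a b | BlockCond v u ∧ β v ≠ 0}.Finite)

/-- Admissible Euler functions. -/
def AdmissibleEuler (μ : Strip a b → ℤ) : Prop :=
  AdmissibleBetti a b (fun v => (μ v).natAbs)

end Functors

section More

open Strip DirectSum

variable (a b : ℝ) (K : Type) [Field K]

attribute [local instance] Classical.propDecidable

lemma condMap_comp (P : Strip a b → Prop)
    (hconv : ∀ ⦃u u' u'' : Strip a b⦄, u ≤ u' → u' ≤ u'' → P u → P u'' → P u')
    {u u' u'' : Strip a b} (h1 : u ≤ u') (h2 : u' ≤ u'') :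
    condMap a b K P u u'' =
      (condMap a b K P u u').comp (condMap a b K P u' u'') := by
  refine LinearMap.ext fun f => funext fun h => ?_
  by_cases hx : P u''
  · have hy : P u' := hconv h1 h2 h.down hx
    simp [hx, hy]
  · by_cases hy : P u' <;> simp [hx, hy]

/-- A direct sum of `condFunctor`s for an indexed family of supports. -/
def condSumFunctor (ι : Type) (P : ι → Strip a b → Prop)
    (hconv : ∀ i, ∀ ⦃u u' u'' : Strip a b⦄, u ≤ u' → u' ≤ u'' → P i u → P i u'' → P i u') :
    (Strip a b)ᵒᵖ ⥤ ModuleCat K where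
  obj u := ModuleCat.of K (⨁ i : ι, (PLift (P i u.unop) → K))
  map {x y} f := ModuleCat.ofHom
    (DFinsupp.mapRange.linearMap (fun i => condMap a b K (P i) y.unop x.unop))
  map_id x := by
    have e : (fun i => condMap a b K (P i) x.unop x.unop)
        = fun i : ι => (LinearMap.id : (PLift (P i x.unop) → K) →ₗ[K] _) := by
      funext i
      refine LinearMap.ext fun f => funext fun h => ?_
      show (if h' : P i x.unop then f ⟨h'⟩ else 0) = f h
      rw [dif_pos h.down]
    change ModuleCat.ofHom
      (DFinsupp.mapRange.linearMap fun i => condMap a b K (P i) x.unop x.unop) = _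
    rw [e, DFinsupp.mapRange.linearMap_id]
    rfl
  map_comp {x y z} f g := by
    have e : (fun i => condMap a b K (P i) z.unop x.unop)
        = fun i => (condMap a b K (P i) z.unop y.unop).comp
            (condMap a b K (P i) y.unop x.unop) := by
      funext i
      exact condMap_comp a b K (P i) (hconv i) (leOfHom g.unop) (leOfHom f.unop)
    change ModuleCat.ofHom
      (DFinsupp.mapRange.linearMap fun i => condMap a b K (P i) z.unop x.unop) = _
    rw [e, DFinsupp.mapRange.linearMap_comp]
    rfl

/-- The direct sum `⊕_{v} B_v^{m v}` of contravariant blocks with multiplicities `m`. -/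
def blockSum (m : Strip a b → ℕ) : (Strip a b)ᵒᵖ ⥤ ModuleCat K :=
  condSumFunctor a b K (Σ v : Strip a b, Fin (m v)) (fun s u => BlockCond s.1 u)
    (fun _ _ _ _ h1 h2 hu hu'' => blockCond_convex h1 h2 hu hu'')

/-- The pointwise direct sum of a sequence of functors. -/
def sumFunctor (Q : ℕ → (Strip a b)ᵒᵖ ⥤ ModuleCat K) :
    (Strip a b)ᵒᵖ ⥤ ModuleCat K where
  obj u := ModuleCat.of K (⨁ n : ℕ, (Q n).obj u)
  map {x y} f := ModuleCat.ofHom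
    (DFinsupp.mapRange.linearMap (fun n => (((Q n).map f).hom : (Q n).obj x →ₗ[K] (Q n).obj y)))
  map_id x := by
    have e : (fun n => (((Q n).map (𝟙 x)).hom : (Q n).obj x →ₗ[K] (Q n).obj x))
        = fun n : ℕ => LinearMap.id := by
      funext n; rw [CategoryTheory.Functor.map_id]; rfl
    change ModuleCat.ofHom (DFinsupp.mapRange.linearMap
      fun n => (((Q n).map (𝟙 x)).hom : (Q n).obj x →ₗ[K] (Q n).obj x)) = _
    rw [e, DFinsupp.mapRange.linearMap_id]
    rfl
  map_comp {x y z} f g := by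
    have e : (fun n => (((Q n).map (f ≫ g)).hom : (Q n).obj x →ₗ[K] (Q n).obj z))
        = fun n => ((((Q n).map g).hom : (Q n).obj y →ₗ[K] (Q n).obj z).comp
            (((Q n).map f).hom : (Q n).obj x →ₗ[K] (Q n).obj y)) := by
      funext n; rw [CategoryTheory.Functor.map_comp]; rfl
    change ModuleCat.ofHom (DFinsupp.mapRange.linearMap
      fun n => (((Q n).map (f ≫ g)).hom : (Q n).obj x →ₗ[K] (Q n).obj z)) = _
    rw [e, DFinsupp.mapRange.linearMap_comp]
    rfl

/-- Precomposition with the glide reflection `T`, as an endofunctor of `Mᵒᵖ`. -/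
def Tfun : (Strip a b)ᵒᵖ ⥤ (Strip a b)ᵒᵖ :=
  ((glideEquiv (a := a) (b := b)).monotone.functor).op

/-- A resolution of `G` by functors in `𝒥` (hence a projective resolution in `𝒞`). -/
def IsJResolution (G : (Strip a b)ᵒᵖ ⥤ ModuleCat K)
    (P : ℕ → (Strip a b)ᵒᵖ ⥤ ModuleCat K)
    (d : ∀ n, P (n + 1) ⟶ P n) (ε : P 0 ⟶ G) : Prop :=
  (∀ n, MemJ a b K (P n)) ∧
  (∀ u, Function.Surjective ((ε.app u))) ∧
  (∀ u, Function.Exact ((d 0).app u) (ε.app u)) ∧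
  (∀ n u, Function.Exact ((d (n + 1)).app u) ((d n).app u))

/-- Equivariance of a resolution: `P (n+3) = P n ∘ T` and `d (n+3) = - d n ∘ T`. -/
def IsEquivariantRes (P : ℕ → (Strip a b)ᵒᵖ ⥤ ModuleCat K)
    (d : ∀ n, P (n + 1) ⟶ P n) : Prop :=
  ∃ hEq : ∀ n, P (n + 3) = Tfun a b ⋙ P n,
    ∀ n, d (n + 3) =
      eqToHom (hEq (n + 1)) ≫ (-(Functor.whiskerLeft (Tfun a b) (d n))) ≫ eqToHom (hEq n).symm

/-- The cochain complex `Nat(P_•, S_v)` obtained by applying `Nat(-, S_v)` to a resolution. -/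
def dStar (P : ℕ → (Strip a b)ᵒᵖ ⥤ ModuleCat K) (d : ∀ n, P (n + 1) ⟶ P n)
    (v : Strip a b) (n : ℕ) :
    (P n ⟶ SimpleF a b K v) →ₗ[K] (P (n + 1) ⟶ SimpleF a b K v) :=
  Linear.leftComp K (SimpleF a b K v) (d n)

/-- `dim_K Extⁿ_𝒞(G, S_v)`, computed as the `n`-th cohomology of `Nat(P_•, S_v)` for a
projective resolution `P_•` of `G` in `𝒞`. -/
def extDim (P : ℕ → (Strip a b)ᵒᵖ ⥤ ModuleCat K) (d : ∀ n, P (n + 1) ⟶ P n)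
    (v : Strip a b) : ℕ → ℕ
  | 0 => Module.finrank K (LinearMap.ker (dStar a b K P d v 0))
  | (n + 1) =>
      Module.finrank K
        (↥(LinearMap.ker (dStar a b K P d v (n + 1))) ⧸
          Submodule.comap (LinearMap.ker (dStar a b K P d v (n + 1))).subtype
            (LinearMap.range (dStar a b K P d v n)))

/-- The partial alternating sum `Σ_{n < N} (-1)ⁿ dim Extⁿ(F, S_v)`. -/
def eulerAt (P : ℕ → (Strip a b)ᵒᵖ ⥤ ModuleCat K) (d : ∀ n, P (n + 1) ⟶ P n)
    (v : Strip a b) (N : ℕ) : ℤ :=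
  ∑ n ∈ Finset.range N, (-1 : ℤ) ^ n * (extDim a b K P d v n : ℤ)

/-- Objects of `𝒥`. -/
def JObj : Type 1 := {G : (Strip a b)ᵒᵖ ⥤ ModuleCat.{0} K // MemJ a b K G}

/-- Objects of `pres(𝒥)`. -/
def PresObj : Type 1 := {G : (Strip a b)ᵒᵖ ⥤ ModuleCat.{0} K // JPresentable a b K G}

/-- Relations defining `K₀` of `𝒥`: `[Q] = [P] + [R]` for every (automatically split)
short exact sequence `0 → P → Q → R → 0` in `𝒥`. -/
def K0JRelations : Set (FreeAbelianGroup (JObj a b K)) :=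
  {x | ∃ (P Q R : JObj a b K) (κ : P.1 ⟶ Q.1) (ρ : Q.1 ⟶ R.1),
    (∀ u, Function.Injective (κ.app u)) ∧ (∀ u, Function.Surjective (ρ.app u)) ∧
    (∀ u, Function.Exact (κ.app u) (ρ.app u)) ∧
    x = FreeAbelianGroup.of Q - FreeAbelianGroup.of P - FreeAbelianGroup.of R}

/-- The Grothendieck group `K₀(𝒥)`. -/
def K0J : Type 1 :=
  FreeAbelianGroup (JObj a b K) ⧸ AddSubgroup.closure (K0JRelations a b K)

instance : AddCommGroup (K0J a b K) := by unfold K0J; infer_instance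

/-- The class `[G] ∈ K₀(𝒥)`. -/
def K0Jmk (G : JObj a b K) : K0J a b K :=
  QuotientAddGroup.mk (FreeAbelianGroup.of G)

/-- Relations defining `K₀` of `pres(𝒥)`: `[Q] = [P] + [R]` for every short exact
sequence `0 → P → Q → R → 0` of `𝒥`-presentable functors. -/
def K0PresRelations : Set (FreeAbelianGroup (PresObj a b K)) :=
  {x | ∃ (P Q R : PresObj a b K) (κ : P.1 ⟶ Q.1) (ρ : Q.1 ⟶ R.1),
    (∀ u, Function.Injective (κ.app u)) ∧ (∀ u, Function.Surjective (ρ.app u)) ∧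
    (∀ u, Function.Exact (κ.app u) (ρ.app u)) ∧
    x = FreeAbelianGroup.of Q - FreeAbelianGroup.of P - FreeAbelianGroup.of R}

/-- The Grothendieck group `K₀(pres 𝒥)`. -/
def K0Pres : Type 1 :=
  FreeAbelianGroup (PresObj a b K) ⧸ AddSubgroup.closure (K0PresRelations a b K)

instance : AddCommGroup (K0Pres a b K) := by unfold K0Pres; infer_instance

/-- The class `[G] ∈ K₀(pres 𝒥)`. -/
def K0PresMk (G : PresObj a b K) : K0Pres a b K :=
  QuotientAddGroup.mk (FreeAbelianGroup.of G)

/-- The abelian group `G(𝔹)` of admissible Euler functions. -/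
def eulerGroup : AddSubgroup (Strip a b → ℤ) where
  carrier := {μ | AdmissibleEuler a b μ}
  zero_mem' := by
    refine ⟨fun v _ => rfl, ⟨0, fun v _ => rfl⟩, fun u => ?_⟩
    convert Set.finite_empty
    ext v; simp
  add_mem' := by
    rintro μ ν ⟨h1, ⟨c1, h2⟩, h3⟩ ⟨h1', ⟨c2, h2'⟩, h3'⟩
    refine ⟨fun v hv => ?_, ⟨max c1 c2, fun v hv => ?_⟩, fun u => ?_⟩
    · simp only [Pi.add_apply]
      rw [show μ v = 0 by simpa using h1 v hv, show ν v = 0 by simpa using h1' v hv]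
      rfl
    · simp only [Pi.add_apply]
      rw [show μ v = 0 by simpa using h2 v (lt_of_le_of_lt (le_max_left _ _) hv),
        show ν v = 0 by simpa using h2' v (lt_of_le_of_lt (le_max_right _ _) hv)]
      rfl
    · refine Set.Finite.subset ((h3 u).union (h3' u)) ?_
      rintro v ⟨hb, hne⟩
      by_cases hμ : μ v = 0
      · exact Or.inr ⟨hb, by simp only [Pi.add_apply, hμ, zero_add] at hne; simpa using hne⟩
      · exact Or.inl ⟨hb, by simpa using hμ⟩
  neg_mem' := by
    rintro μ ⟨h1, h2, h3⟩
    refine ⟨fun v hv => ?_, ?_, fun u => ?_⟩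
    · simp only [Pi.neg_apply, Int.natAbs_neg]; exact h1 v hv
    · obtain ⟨c, hc⟩ := h2
      exact ⟨c, fun v hv => by simp only [Pi.neg_apply, Int.natAbs_neg]; exact hc v hv⟩
    · refine Set.Finite.subset (h3 u) ?_
      rintro v ⟨hb, hne⟩
      exact ⟨hb, by simpa [Int.natAbs_neg] using hne⟩

/-- Subfunctors of a functor `G : Mᵒᵖ ⥤ Vect_K`. -/
def Subfunctor (G : (Strip a b)ᵒᵖ ⥤ ModuleCat K) : Type :=
  {S : ∀ u : Strip a b, Submodule K (G.obj (op u)) //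
    ∀ (u u' : Strip a b) (h : u' ≤ u), Submodule.map (seqMap G h).hom (S u) ≤ S u'}

end More

end

/-- the glide reflection `T`, characterized by the incidence conditions
(the lines `l₀`, `h`, `g₁` meet in a common point, i.e. `(T u).1 + u.2 = a`, and the
lines `l₁`, `g₀`, `h₁` meet in a common point, i.e. `u.1 + (T u).2 = b`), is a
well-defined order-preserving automorphism of the poset `M`, and it is unique. -/
theorem glide_reflection_unique_order_automorphism (a b : ℝ) (hab : a < b) :
    ∃! T : Strip a b ≃o Strip a b,
      ∀ u : Strip a b, ((T u).1.1 + u.1.2 = a) ∧ (u.1.1 + (T u).1.2 = b) := by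
  refine ⟨Strip.glideEquiv, fun u => ?_, fun T hT => ?_⟩
  · rw [Strip.glideEquiv_coords]; constructor <;> dsimp <;> ring
  · ext u
    have h := hT u
    have : (T u).1 = (a - u.1.2, b - u.1.1) := by
      ext <;> dsimp <;> linarith [h.1, h.2]
    exact Subtype.ext (this.trans (Strip.glideEquiv_coords u).symm)
end

section
/- For every point v in the interior of M, and every functor G : M^op → Vect_F vanishing on the boundary ∂M, evaluation at the element 1 ∈ F = B_v(v) yields a linear isomorphism Nat(B_v, G) ≅ G(v), where B_v is the contravariant block at v. -/
open CategoryTheory CategoryTheory.Limits Opposite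

noncomputable section

section Functors

open Strip

variable (a b : ℝ) (K : Type) [Field K]

attribute [local instance] Classical.propDecidable

variable {a b K}

variable (a b K)

end Functors

section More

open Strip DirectSum

variable (a b : ℝ) (K : Type) [Field K]

attribute [local instance] Classical.propDecidable

end More

end

section BlockYonedaAux

open Strip CategoryTheory Opposite

attribute [local instance] Classical.propDecidable

variable {a b : ℝ} {K : Type} [Field K]

lemma seqMap_comp' (G : (Strip a b)ᵒᵖ ⥤ ModuleCat K) {x y z : Strip a b}
    (h1 : x ≤ y) (h2 : y ≤ z) (t : G.obj (op z)) :
    seqMap G h1 (seqMap G h2 t) = seqMap G (h1.trans h2) t := by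
  have e : (homOfLE (h1.trans h2)).op = (homOfLE h2).op ≫ (homOfLE h1).op := rfl
  show (G.map (homOfLE h1).op) ((G.map (homOfLE h2).op) t) = G.map (homOfLE (h1.trans h2)).op t
  rw [e, G.map_comp]
  rfl

lemma block_vanish (G : (Strip a b)ᵒᵖ ⥤ ModuleCat K)
    (hG : VanishesOnBoundary a b K G) {v u : Strip a b}
    (hv : Strip.InInterior v) (hle : u ≤ v) (hne : ¬ Strip.BlockCond v u)
    (x : G.obj (op v)) : seqMap G hle x = 0 := by
  obtain ⟨hv1, hv2⟩ := hv
  by_cases h2 : u.1.1 < b - v.1.2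
  · -- then the second condition must fail
    have h3 : u.1.2 ≤ a - v.1.1 := by
      by_contra h3
      exact hne ⟨hle, h2, lt_of_not_ge h3⟩
    set w : Strip a b := ⟨(v.1.1, a - v.1.1), by constructor <;> dsimp <;> linarith⟩ with hw
    have huw : u ≤ w := ⟨hle.1, h3⟩
    have hwv : w ≤ v := ⟨le_rfl, by show a - v.1.1 ≤ v.1.2; linarith⟩
    have hb : Strip.OnBoundary w := Or.inl (by show v.1.1 + (a - v.1.1) = a; ring)
    have : seqMap G hwv x = 0 := hG w hb _
    rw [← seqMap_comp' G huw hwv x, this, map_zero]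
  · push_neg at h2
    set w : Strip a b := ⟨(b - v.1.2, v.1.2), by constructor <;> dsimp <;> linarith⟩ with hw
    have huw : u ≤ w := ⟨h2, hle.2⟩
    have hwv : w ≤ v := ⟨by show v.1.1 ≤ b - v.1.2; linarith, le_rfl⟩
    have hb : Strip.OnBoundary w := Or.inr (by show b - v.1.2 + v.1.2 = b; ring)
    have : seqMap G hwv x = 0 := hG w hb _
    rw [← seqMap_comp' G huw hwv x, this, map_zero]

/-- The linear component of the inverse natural transformation. -/
noncomputable def blockMkLin (G : (Strip a b)ᵒᵖ ⥤ ModuleCat K) (v : Strip a b)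
    (x : G.obj (op v)) (u : Strip a b) :
    (PLift (Strip.BlockCond v u) → K) →ₗ[K] G.obj (op u) where
  toFun f := if h : Strip.BlockCond v u then f ⟨h⟩ • seqMap G h.1 x else 0
  map_add' f g := by by_cases h : Strip.BlockCond v u <;> simp [h, add_smul]
  map_smul' c f := by by_cases h : Strip.BlockCond v u <;> simp [h, mul_smul]

end BlockYonedaAux

section BlockYonedaAux2

open Strip CategoryTheory Opposite

attribute [local instance] Classical.propDecidable

variable {a b : ℝ} {K : Type} [Field K]

/-- The inverse natural transformation. -/
noncomputable def blockMk (G : (Strip a b)ᵒᵖ ⥤ ModuleCat K)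
    (hG : VanishesOnBoundary a b K G) (v : Strip a b)
    (hv : Strip.InInterior v) (x : G.obj (op v)) : Block a b K v ⟶ G where
  app u := ModuleCat.ofHom (blockMkLin G v x u.unop)
  naturality {u u'} f := by
    have h10 : u'.unop ≤ u.unop := leOfHom f.unop
    have hf : f = (homOfLE h10).op := rfl
    ext g
    show blockMkLin G v x u'.unop
        (condMap a b K (Strip.BlockCond v) u'.unop u.unop g)
      = (G.map f) (blockMkLin G v x u.unop g)
    by_cases h : Strip.BlockCond v u.unop
    · have hcm : condMap a b K (Strip.BlockCond v) u'.unop u.unop g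
          = fun _ => g ⟨h⟩ := funext fun p => dif_pos h
      rw [hcm]
      show (if h' : Strip.BlockCond v u'.unop
            then (fun _ => g ⟨h⟩) (⟨h'⟩ : PLift _) • seqMap G h'.1 x else 0)
          = (G.map f) (if h0 : Strip.BlockCond v u.unop
            then g ⟨h0⟩ • seqMap G h0.1 x else 0)
      rw [dif_pos h, hf]
      have : (G.map (homOfLE h10).op) (g ⟨h⟩ • seqMap G h.1 x)
          = g ⟨h⟩ • seqMap G (h10.trans h.1) x := by
        rw [map_smul]
        exact congrArg _ (seqMap_comp' G h10 h.1 x)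
      rw [this]
      by_cases h' : Strip.BlockCond v u'.unop
      · rw [dif_pos h']
      · rw [dif_neg h', block_vanish G hG hv (h10.trans h.1) h' x, smul_zero]
    · have hcm : condMap a b K (Strip.BlockCond v) u'.unop u.unop g = 0 :=
        funext fun p => dif_neg h
      rw [hcm, map_zero]
      show (0 : G.obj u') = (G.map f) (if h0 : Strip.BlockCond v u.unop
            then g ⟨h0⟩ • seqMap G h0.1 x else 0)
      rw [dif_neg h, map_zero]

end BlockYonedaAux2

/-- for `v` in the interior of `M` and `G : Mᵒᵖ ⥤ Vect_K` vanishing on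
`∂M`, evaluation at `1 ∈ K = B_v(v)` is a linear isomorphism `Nat(B_v, G) ≅ G(v)`. -/
theorem block_yoneda (a b : ℝ) (K : Type) [Field K] (v : Strip a b)
    (hv : Strip.InInterior v) (G : (Strip a b)ᵒᵖ ⥤ ModuleCat K)
    (hG : VanishesOnBoundary a b K G) :
    ∃ e : (Block a b K v ⟶ G) ≃ₗ[K] G.obj (op v),
      ∀ η : Block a b K v ⟶ G,
        e η = η.app (op v) ((fun _ => (1 : K)) : PLift (Strip.BlockCond v v) → K) := by
    classical
  have hvv : Strip.BlockCond v v := by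
    obtain ⟨h1, h2⟩ := hv
    exact ⟨le_rfl, by linarith, by linarith⟩
  refine ⟨{ toFun := fun η => η.app (op v) (fun _ => (1 : K))
            map_add' := fun η η' => rfl
            map_smul' := fun c η => rfl
            invFun := fun x => blockMk G hG v hv x
            left_inv := ?_
            right_inv := ?_ }, fun η => rfl⟩
  · intro η
    apply NatTrans.ext
    funext u
    apply ModuleCat.hom_ext
    apply LinearMap.ext
    intro g
    show (if h : Strip.BlockCond v u.unop
          then g ⟨h⟩ • seqMap G h.1 (η.app (op v) (fun _ => (1 : K))) else 0)
        = η.app u g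
    by_cases h : Strip.BlockCond v u.unop
    · rw [dif_pos h]
      have hnat := congrArg
        (fun (m : (Block a b K v).obj (op v) ⟶ G.obj u) =>
          m ((fun _ => (1 : K)) : PLift (Strip.BlockCond v v) → K))
        (η.naturality ((homOfLE h.1).op : op v ⟶ u))
      dsimp at hnat
      have hcm : (Block a b K v).map ((homOfLE h.1).op : op v ⟶ u)
          ((fun _ => (1 : K)) : PLift (Strip.BlockCond v v) → K)
          = (fun _ => (1 : K)) := funext fun p => dif_pos hvv
      have hnat := (congrArg (fun t => η.app u t) hcm).symm.trans hnat
      have hseq : seqMap G h.1 (η.app (op v) (fun _ => (1 : K)))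
          = η.app u (fun _ => (1 : K)) := hnat.symm
      rw [hseq]
      erw [← map_smul (η.app u).hom]
      congr 1
      funext p
      have hp : p = ⟨h⟩ := Subsingleton.elim _ _
      rw [hp]
      show g ⟨h⟩ * 1 = g ⟨h⟩
      rw [mul_one]
    · rw [dif_neg h]
      have hg : g = 0 := funext fun p => (h p.down).elim
      rw [hg, map_zero]
  · intro x
    show (if h : Strip.BlockCond v v
          then ((fun _ => (1 : K)) : PLift (Strip.BlockCond v v) → K) ⟨h⟩ •
            seqMap G h.1 x else 0) = x
    rw [dif_pos hvv, one_smul]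
    show G.map (homOfLE hvv.1).op x = x
    have : (homOfLE hvv.1).op = 𝟙 (op v) := rfl
    rw [this, G.map_id]
    rfl
end

section
/- Let C be an abelian category and J a full replete additive subcategory of projective objects of C. Then the cokernel of any homomorphism between J-presentable objects is again J-presentable. In particular, a morphism of J-presentable objects is an epimorphism in pres(J) if and only if it is an epimorphism in C. -/
open CategoryTheory CategoryTheory.Limits

noncomputable section

universe v u

variable {C : Type u} [Category.{v} C]

/-- An object `X` is `J`-presentable if there is an exact sequence `Q → P → X → 0`
with `P`, `Q` in `J`. -/
def JPres [Abelian C] (J : C → Prop) (X : C) : Prop :=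
  ∃ (P Q : C) (_ : J P) (_ : J Q) (f : Q ⟶ P) (g : P ⟶ X) (w : f ≫ g = 0),
    Epi g ∧ (ShortComplex.mk f g w).Exact

/-- for a full replete additive subcategory `J` of projectives in an abelian
category `C`, the cokernel of any morphism of `J`-presentable objects is `J`-presentable;
in particular, a morphism of `J`-presentable objects is an epimorphism in `pres(J)` iff it
is an epimorphism in `C`. -/
theorem cokernel_JPresentable_and_epi_iff [Abelian C] (J : C → Prop)
    (hrepl : ∀ {X Y : C}, J X → (X ≅ Y) → J Y)
    (hsum : ∀ {X Y : C}, J X → J Y → J (X ⊞ Y))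
    (hproj : ∀ X : C, J X → Projective X) :
    (∀ (X Y : C), JPres J X → JPres J Y → ∀ f : X ⟶ Y, JPres J (cokernel f)) ∧
    (∀ (X Y : ObjectProperty.FullSubcategory (JPres J)) (f : X ⟶ Y),
      Epi f ↔ Epi ((ObjectProperty.ι (JPres J)).map f)) := by
  have main : ∀ (X Y : C), JPres J X → JPres J Y → ∀ f : X ⟶ Y, JPres J (cokernel f) := by
    rintro X Y ⟨P, Q, hP, hQ, fX, gX, wX, hgX, hexX⟩
      ⟨P', Q', hP', hQ', fY, gY, wY, hgY, hexY⟩ f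
    -- lift gX ≫ f through gY using projectivity of P
    haveI := hproj P hP
    haveI := hgY
    obtain ⟨h, hh⟩ : ∃ h : P ⟶ P', h ≫ gY = gX ≫ f :=
      ⟨Projective.factorThru (gX ≫ f) gY, Projective.factorThru_comp _ _⟩
    refine ⟨P', P ⊞ Q', hP', hsum hP hQ', biprod.desc h fY,
      gY ≫ cokernel.π f, ?_, ?_, ?_⟩
    · ext
      · simp [hh, reassoc_of% hh]
      · simp [reassoc_of% wY]
    · exact epi_comp _ _
    · rw [ShortComplex.exact_iff_exact_up_to_refinements]
      intro A x₂ hx₂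
      dsimp at x₂ hx₂ ⊢
      -- x₂ ≫ gY ≫ π = 0, so x₂ ≫ gY factors through f up to refinement
      have hexc : (ShortComplex.mk f (cokernel.π f) (cokernel.condition f)).Exact :=
        ShortComplex.exact_of_g_is_cokernel _ (cokernelIsCokernel f)
      obtain ⟨A₁, π₁, hπ₁, x, hx⟩ := hexc.exact_up_to_refinements (x₂ ≫ gY)
        (by rw [Category.assoc]; exact hx₂)
      -- refine x through gX
      haveI := hgX
      obtain ⟨A₂, π₂, hπ₂, p, hp⟩ := surjective_up_to_refinements_of_epi gX x
      dsimp at hx hp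
      have key : (π₂ ≫ π₁ ≫ x₂ - p ≫ h) ≫ gY = 0 := by
        have : π₂ ≫ π₁ ≫ x₂ ≫ gY = p ≫ h ≫ gY := by
          rw [hh, hx, reassoc_of% hp]
        simp only [Preadditive.sub_comp, Category.assoc, sub_eq_zero]
        simpa using this
      obtain ⟨A₃, π₃, hπ₃, q, hq⟩ := hexY.exact_up_to_refinements _ key
      refine ⟨A₃, π₃ ≫ π₂ ≫ π₁, epi_comp _ _, biprod.lift (π₃ ≫ p) q, ?_⟩
      dsimp at hq
      simp only [Category.assoc, biprod.lift_desc]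
      have := hq
      simp only [Preadditive.comp_sub, Category.assoc, sub_eq_iff_eq_add] at this
      rw [this]
      abel
  refine ⟨main, fun X Y f => ?_⟩
  constructor
  · intro hf
    let f' : X.obj ⟶ Y.obj := (ObjectProperty.ι (JPres J)).map f
    show Epi f'
    apply Abelian.epi_of_cokernel_π_eq_zero
    have hc : JPres J (cokernel f') := main X.obj Y.obj X.property Y.property f'
    let c : ObjectProperty.FullSubcategory (JPres J) := ⟨cokernel f', hc⟩
    let π' : Y ⟶ c := ObjectProperty.homMk (cokernel.π f')
    have h1 : f ≫ π' = f ≫ (0 : Y ⟶ c) := by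
      ext
      show f' ≫ cokernel.π f' = _
      simp [cokernel.condition]
    have := hf.left_cancellation π' (0 : Y ⟶ c) h1
    have := congrArg (fun g => g.hom) this
    simpa [π'] using this
  · intro hf
    exact (ObjectProperty.ι (JPres J)).epi_of_epi_map hf

end
end

section
/- Let C be an abelian category and J a full replete additive subcategory of projectives in C. Suppose that for every homomorphism ψ : Q → P with Q, P in J there is an exact sequence R → Q → P with R in J. Then the full subcategory pres(J) of J-presentable objects is an abelian subcategory of C (closed under kernels and cokernels, with such kernels and cokernels computed as in C). -/
open CategoryTheory CategoryTheory.Limits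

noncomputable section

universe v u

variable {C : Type u} [Category.{v} C]

/-- if for every morphism `ψ : Q → P` with `Q, P` in `J` there is an exact
sequence `R → Q → P` with `R` in `J`, then the `J`-presentable objects form an abelian
subcategory of `C`: they are closed under the kernels and cokernels computed in `C`. -/
theorem JPresentable_abelian_subcategory [Abelian C] (J : C → Prop)
    (hrepl : ∀ {X Y : C}, J X → (X ≅ Y) → J Y)
    (hsum : ∀ {X Y : C}, J X → J Y → J (X ⊞ Y))
    (hproj : ∀ X : C, J X → Projective X)
    (hker : ∀ (Q P : C), J Q → J P → ∀ ψ : Q ⟶ P,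
      ∃ (R : C) (_ : J R) (φ : R ⟶ Q) (w : φ ≫ ψ = 0), (ShortComplex.mk φ ψ w).Exact) :
    ∀ (X Y : C), JPres J X → JPres J Y → ∀ f : X ⟶ Y,
      JPres J (kernel f) ∧ JPres J (cokernel f) := by
  intro X Y hX hY f
  obtain ⟨P₁, Q₁, hP₁, hQ₁, f₁, g₁, w₁, hg₁, hex₁⟩ := hX
  obtain ⟨P₂, Q₂, hP₂, hQ₂, f₂, g₂, w₂, hg₂, hex₂⟩ := hY
  haveI := hproj P₁ hP₁
  haveI := hg₁
  haveI := hg₂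
  -- lift `f` along the presentations
  obtain ⟨ft, hft⟩ : ∃ ft : P₁ ⟶ P₂, ft ≫ g₂ = g₁ ≫ f :=
    ⟨Projective.factorThru (g₁ ≫ f) g₂, Projective.factorThru_comp _ _⟩
  have hφg₂ : biprod.desc ft f₂ ≫ g₂ = biprod.fst ≫ (g₁ ≫ f) := by
    apply biprod.hom_ext'
    · simp [hft]
    · simp [w₂]
  -- the resolution of the morphism `biprod.desc ft f₂`
  obtain ⟨R, hR, ρ, wρ, hexρ⟩ := hker _ _ (hsum hP₁ hQ₂) hP₂ (biprod.desc ft f₂)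
  -- the map from `R` to the kernel
  have hu' : (ρ ≫ biprod.fst ≫ g₁) ≫ f = 0 := by
    have h0 : ρ ≫ biprod.desc ft f₂ ≫ g₂ = 0 := by rw [← Category.assoc, wρ, zero_comp]
    rw [hφg₂] at h0
    simpa using h0
  have hu_ι : kernel.lift f (ρ ≫ biprod.fst ≫ g₁) hu' ≫ kernel.ι f
      = ρ ≫ biprod.fst ≫ g₁ := kernel.lift_ι _ _ _
  have hepi_u : Epi (kernel.lift f (ρ ≫ biprod.fst ≫ g₁) hu') := by
    rw [epi_iff_surjective_up_to_refinements]
    intro A x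
    obtain ⟨A₁, π₁, hπ₁, p, hp⟩ := surjective_up_to_refinements_of_epi g₁ (x ≫ kernel.ι f)
    have h2 : (p ≫ ft) ≫ g₂ = 0 := by
      rw [Category.assoc, hft, ← Category.assoc, ← hp]
      simp
    obtain ⟨A₂, π₂, hπ₂, q, hq⟩ := hex₂.exact_up_to_refinements (p ≫ ft) h2
    dsimp at hq
    have he : (biprod.lift (π₂ ≫ p) (-q)) ≫ biprod.desc ft f₂ = 0 := by
      rw [biprod.lift_desc, Category.assoc, hq]
      simp
    obtain ⟨A₃, π₃, hπ₃, r, hr⟩ := hexρ.exact_up_to_refinements (biprod.lift (π₂ ≫ p) (-q)) he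
    dsimp at hr
    refine ⟨A₃, π₃ ≫ π₂ ≫ π₁, epi_comp _ _, r, ?_⟩
    rw [← cancel_mono (kernel.ι f)]
    simp only [Category.assoc]
    rw [hu_ι, ← Category.assoc r, ← hr]
    simp only [Category.assoc, biprod.lift_fst_assoc]
    rw [← Category.assoc π₂, ← hp]
    simp
  -- resolve the relations
  obtain ⟨S, hS, σ, wσ, hexσ⟩ := hker _ _ (hsum hR hQ₁) hP₁ (biprod.desc (ρ ≫ biprod.fst) f₁)
  have hθg₁ : biprod.desc (ρ ≫ biprod.fst) f₁ ≫ g₁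
      = biprod.fst ≫ (ρ ≫ biprod.fst ≫ g₁) := by
    apply biprod.hom_ext'
    · simp
    · simp [w₁]
  have wt : (σ ≫ biprod.fst) ≫ kernel.lift f (ρ ≫ biprod.fst ≫ g₁) hu' = 0 := by
    rw [← cancel_mono (kernel.ι f)]
    rw [Category.assoc, hu_ι, zero_comp]
    have h0 : σ ≫ biprod.desc (ρ ≫ biprod.fst) f₁ ≫ g₁ = 0 := by
      rw [← Category.assoc, wσ, zero_comp]
    rw [hθg₁] at h0
    simpa using h0
  constructor
  · -- kernel case
    refine ⟨R, S, hR, hS, σ ≫ biprod.fst, kernel.lift f (ρ ≫ biprod.fst ≫ g₁) hu', wt,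
      hepi_u, ?_⟩
    rw [ShortComplex.exact_iff_exact_up_to_refinements]
    intro A x hx
    dsimp at x hx
    have hx'' : (x ≫ ρ ≫ biprod.fst) ≫ g₁ = 0 := by
      have h0 : (x ≫ kernel.lift f (ρ ≫ biprod.fst ≫ g₁) hu') ≫ kernel.ι f = 0 := by
        rw [hx, zero_comp]
      rw [Category.assoc, hu_ι] at h0
      simpa using h0
    obtain ⟨A₁, π₁, hπ₁, q, hq⟩ := hex₁.exact_up_to_refinements (x ≫ ρ ≫ biprod.fst) hx''
    dsimp at hq
    have he : (biprod.lift (π₁ ≫ x) (-q)) ≫ biprod.desc (ρ ≫ biprod.fst) f₁ = 0 := by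
      rw [biprod.lift_desc]
      simp only [Category.assoc]
      rw [hq]
      simp
    obtain ⟨A₂, π₂, hπ₂, s, hs⟩ := hexσ.exact_up_to_refinements (biprod.lift (π₁ ≫ x) (-q)) he
    dsimp at hs
    refine ⟨A₂, π₂ ≫ π₁, epi_comp _ _, s, ?_⟩
    dsimp
    rw [← Category.assoc s, ← hs]
    simp
  · -- cokernel case
    have wc : biprod.desc ft f₂ ≫ g₂ ≫ cokernel.π f = 0 := by
      rw [← Category.assoc, hφg₂]
      simp
    have hexcok : (ShortComplex.mk f (cokernel.π f) (cokernel.condition f)).Exact :=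
      ShortComplex.exact_of_g_is_cokernel _ (cokernelIsCokernel f)
    refine ⟨P₂, P₁ ⊞ Q₂, hP₂, hsum hP₁ hQ₂, biprod.desc ft f₂, g₂ ≫ cokernel.π f, wc,
      epi_comp _ _, ?_⟩
    rw [ShortComplex.exact_iff_exact_up_to_refinements]
    intro A x hx
    dsimp at x hx
    have hx' : (x ≫ g₂) ≫ cokernel.π f = 0 := by simpa using hx
    obtain ⟨A₁, π₁, hπ₁, y, hy⟩ := hexcok.exact_up_to_refinements (x ≫ g₂) hx'
    dsimp at y hy
    obtain ⟨A₂, π₂, hπ₂, p, hp⟩ := surjective_up_to_refinements_of_epi g₁ y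
    have h4 : (π₂ ≫ π₁ ≫ x - p ≫ ft) ≫ g₂ = 0 := by
      rw [Preadditive.sub_comp]
      simp only [Category.assoc]
      rw [hft, ← Category.assoc p, ← hp]
      simp only [Category.assoc]
      rw [← hy]
      simp
    obtain ⟨A₃, π₃, hπ₃, q, hq⟩ := hex₂.exact_up_to_refinements _ h4
    dsimp at hq
    refine ⟨A₃, π₃ ≫ π₂ ≫ π₁, epi_comp _ _, biprod.lift (π₃ ≫ p) q, ?_⟩
    dsimp
    rw [biprod.lift_desc, ← hq]
    simp only [Preadditive.comp_sub, Category.assoc]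
    abel
end
end

section
/- Let C be an abelian category and J a full replete additive subcategory of projectives such that every J-presentable object X admits a projective cover P → X with P in J. Then J is exactly the subcategory of projective objects of the abelian category pres(J): an object of pres(J) is projective in pres(J) if and only if it lies in J. -/
open CategoryTheory CategoryTheory.Limits

noncomputable section

universe v u

variable {C : Type u} [Category.{v} C]

section Aux

open CategoryTheory.Abelian CategoryTheory.Abelian.Pseudoelement

attribute [local instance] Pseudoelement.objectToSort Pseudoelement.homToFun

variable [Abelian C]

/-- Every object of `J` is `J`-presentable. -/
lemma jPres_of_mem (J : C → Prop) {P : C} (hP : J P) : JPres J P :=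
  ⟨P, P, hP, hP, 0, 𝟙 P, by simp, inferInstance,
    (ShortComplex.exact_iff_mono _ rfl).2 (by dsimp; infer_instance)⟩

/-- `pres J` is closed under cokernels. -/
lemma jPres_cokernel (J : C → Prop)
    (hsum : ∀ {X Y : C}, J X → J Y → J (X ⊞ Y))
    (hproj : ∀ X : C, J X → Projective X)
    {E Y : C} (hE : JPres J E) (hY : JPres J Y) (e : E ⟶ Y) :
    JPres J (cokernel e) := by
  obtain ⟨P, Q, hP, hQ, f, g, w, hg, hex⟩ := hY
  obtain ⟨PE, QE, hPE, -, fE, gE, wE, hgE, -⟩ := hE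
  haveI := hproj _ hPE
  haveI := hg; haveI := hgE
  let u : PE ⟶ P := Projective.factorThru (gE ≫ e) g
  have hu : u ≫ g = gE ≫ e := Projective.factorThru_comp _ _
  let g' : P ⟶ cokernel e := g ≫ cokernel.π e
  have hug' : u ≫ g' = 0 := by
    rw [show u ≫ g' = (u ≫ g) ≫ cokernel.π e by simp [g'], hu, Category.assoc,
      cokernel.condition, comp_zero]
  have hfg' : f ≫ g' = 0 := by
    rw [show f ≫ g' = (f ≫ g) ≫ cokernel.π e by simp [g'], w, zero_comp]
  let φ : PE ⊞ Q ⟶ P := biprod.desc u f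
  have w' : φ ≫ g' = 0 := by
    apply biprod.hom_ext'
    · simpa [φ] using hug'
    · simpa [φ] using hfg'
  haveI hepi : Epi g' := epi_comp _ _
  -- the kernel of the composite maps onto the kernel of `cokernel.π e`
  let p : kernel g' ⟶ kernel (cokernel.π e) :=
    kernel.lift _ (kernel.ι g' ≫ g) (by rw [Category.assoc]; exact kernel.condition g')
  have hpι : p ≫ kernel.ι (cokernel.π e) = kernel.ι g' ≫ g := kernel.lift_ι _ _ _
  have hp : Epi p := by
    apply epi_of_pseudo_surjective
    intro y
    obtain ⟨x, hx⟩ := pseudo_surjective_of_epi g (pseudoApply (kernel.ι (cokernel.π e)) y)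
    have hx0 : pseudoApply g' x = 0 := by
      rw [show pseudoApply g' x = pseudoApply (cokernel.π e) (pseudoApply g x) from
        (Pseudoelement.comp_apply g (cokernel.π e) x), hx,
        show pseudoApply (cokernel.π e) (pseudoApply (kernel.ι (cokernel.π e)) y)
          = pseudoApply (kernel.ι (cokernel.π e) ≫ cokernel.π e) y from
          (Pseudoelement.comp_apply _ _ _).symm,
        kernel.condition, Pseudoelement.zero_apply]
    have hker : (ShortComplex.mk (kernel.ι g') g' (kernel.condition g')).Exact :=
      ShortComplex.exact_of_f_is_kernel _ (kernelIsKernel g')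
    obtain ⟨x', hx'⟩ := pseudo_exact_of_exact hker x hx0
    refine ⟨x', pseudo_injective_of_mono (kernel.ι (cokernel.π e)) ?_⟩
    rw [show pseudoApply (kernel.ι (cokernel.π e)) (pseudoApply p x')
        = pseudoApply (p ≫ kernel.ι (cokernel.π e)) x' from (Pseudoelement.comp_apply _ _ _).symm, hpι,
      Pseudoelement.comp_apply, hx', hx]
  -- the lifts of `u` and `f` to the kernel of `g'`
  let ubar : PE ⟶ kernel g' := kernel.lift _ u hug'
  let fbar : Q ⟶ kernel g' := kernel.lift _ f hfg'
  -- exactness of the candidate presentation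
  have hexact : (ShortComplex.mk φ g' w').Exact := by
    rw [ShortComplex.exact_iff_epi_kernel_lift]
    show Epi (kernel.lift g' φ w')
    rw [Preadditive.epi_iff_cancel_zero]
    intro T h hh
    have hubar : ubar ≫ h = 0 := by
      have : biprod.inl ≫ kernel.lift g' φ w' = ubar := by
        apply equalizer.hom_ext
        simp [φ, ubar]
      rw [← this, Category.assoc, hh, comp_zero]
    have hfbar : fbar ≫ h = 0 := by
      have : biprod.inr ≫ kernel.lift g' φ w' = fbar := by
        apply equalizer.hom_ext
        simp [φ, fbar]
      rw [← this, Category.assoc, hh, comp_zero]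
    -- step 1: `h` kills the kernel of `p`.
    have hkerp : kernel.ι p ≫ h = 0 := by
      -- the map `Q ⟶ kernel g` is epi by exactness
      have hq : Epi (kernel.lift g f w) := by
        have := (ShortComplex.exact_iff_epi_kernel_lift _).1 hex
        exact this
      -- `kernel g` maps into `kernel g'`
      let j : kernel g ⟶ kernel g' := kernel.lift _ (kernel.ι g)
        (by rw [show kernel.ι g ≫ g' = (kernel.ι g ≫ g) ≫ cokernel.π e by simp [g'],
          kernel.condition, zero_comp])
      have hqj : kernel.lift g f w ≫ j = fbar := by
        apply equalizer.hom_ext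
        simp [j, fbar]
      have hjh : j ≫ h = 0 := by
        haveI := hq
        rw [← cancel_epi (kernel.lift g f w), ← Category.assoc, hqj, hfbar, comp_zero]
      -- `kernel p` factors through `kernel g`
      have hm0 : (kernel.ι p ≫ kernel.ι g') ≫ g = 0 := by
        rw [Category.assoc, ← hpι, ← Category.assoc, kernel.condition, zero_comp]
      let m : kernel p ⟶ kernel g := kernel.lift _ (kernel.ι p ≫ kernel.ι g')
        (by rw [Category.assoc]
            rw [Category.assoc] at hm0
            exact hm0)
      have hmj : m ≫ j = kernel.ι p := by
        rw [← cancel_mono (kernel.ι g')]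
        simp [m, j]
      rw [← hmj, Category.assoc, hjh, comp_zero]
    -- step 2: `h` factors through `p`.
    haveI := hp
    let h' := Abelian.epiDesc p h hkerp
    have hfac : p ≫ h' = h := Abelian.comp_epiDesc _ _ _
    -- step 3: `PE` maps onto `kernel (cokernel.π e)`.
    have hebar : Epi (kernel.lift (cokernel.π e) e (cokernel.condition e)) := by
      have hS2 : (ShortComplex.mk e (cokernel.π e) (cokernel.condition e)).Exact :=
        ShortComplex.exact_of_g_is_cokernel _ (cokernelIsCokernel e)
      exact (ShortComplex.exact_iff_epi_kernel_lift _).1 hS2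
    have hup : ubar ≫ p = gE ≫ kernel.lift (cokernel.π e) e (cokernel.condition e) := by
      rw [← cancel_mono (kernel.ι (cokernel.π e))]
      rw [Category.assoc, hpι, ← Category.assoc]
      simp [ubar, hu]
    have hz : (gE ≫ kernel.lift (cokernel.π e) e (cokernel.condition e)) ≫ h' = 0 := by
      rw [← hup, Category.assoc, hfac, hubar]
    haveI := hebar
    have hh' : h' = 0 := by
      rw [Category.assoc] at hz
      rw [← cancel_epi (gE ≫ kernel.lift (cokernel.π e) e (cokernel.condition e))]
      rw [Category.assoc, comp_zero]
      exact hz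
    rw [← hfac, hh', comp_zero]
  exact ⟨P, PE ⊞ Q, hP, hsum hPE hQ, φ, g', w', hepi, hexact⟩

/-- Epimorphisms in `pres J` are epimorphisms in `C`. -/
lemma epi_of_epi_in_pres (J : C → Prop)
    (hsum : ∀ {X Y : C}, J X → J Y → J (X ⊞ Y))
    (hproj : ∀ X : C, J X → Projective X)
    {A B : ObjectProperty.FullSubcategory (JPres J)} (e : A.obj ⟶ B.obj)
    (he : Epi (ObjectProperty.homMk e : A ⟶ B)) : Epi e := by
  apply Abelian.epi_of_cokernel_π_eq_zero
  let Cc : ObjectProperty.FullSubcategory (JPres J) := ⟨cokernel e, jPres_cokernel J hsum hproj A.2 B.2 e⟩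
  have h1 : (ObjectProperty.homMk e : A ⟶ B) ≫ (ObjectProperty.homMk (cokernel.π e) : B ⟶ Cc)
      = (ObjectProperty.homMk e : A ⟶ B) ≫ (ObjectProperty.homMk 0 : B ⟶ Cc) := by
    apply ObjectProperty.hom_ext
    show e ≫ cokernel.π e = e ≫ (0 : B.obj ⟶ cokernel e)
    rw [cokernel.condition, comp_zero]
  haveI := he
  have h2 := (cancel_epi (ObjectProperty.homMk e : A ⟶ B)).1 h1
  exact congrArg InducedCategory.Hom.hom h2

end Aux

/-- if every `J`-presentable object admits a projective cover by an object
of `J`, then `J` is exactly the subcategory of projective objects of `pres(J)`. -/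
theorem J_eq_projectives_of_presJ [Abelian C] (J : C → Prop)
    (hrepl : ∀ {X Y : C}, J X → (X ≅ Y) → J Y)
    (hsum : ∀ {X Y : C}, J X → J Y → J (X ⊞ Y))
    (hproj : ∀ X : C, J X → Projective X)
    (hcover : ∀ X : C, JPres J X → ∃ (P : C) (_ : J P) (π : P ⟶ X),
      Epi π ∧ ∀ (Z : C) (g : Z ⟶ P), Epi (g ≫ π) → Epi g) :
    ∀ X : ObjectProperty.FullSubcategory (JPres J), Projective X ↔ J X.obj := by
  intro X
  constructor
  · intro hX
    obtain ⟨P, hP, π, hπ, hess⟩ := hcover X.obj X.2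
    haveI := hπ
    let P' : ObjectProperty.FullSubcategory (JPres J) := ⟨P, jPres_of_mem J hP⟩
    let π' : P' ⟶ X := ObjectProperty.homMk π
    haveI : Epi π' := ⟨fun {Z} a b hab => by
      apply ObjectProperty.hom_ext
      have h2 : π ≫ a.hom = π ≫ b.hom := congrArg InducedCategory.Hom.hom hab
      exact (cancel_epi π).1 h2⟩
    obtain ⟨s, hs⟩ := hX.factors (𝟙 X) π'
    let s' : X.obj ⟶ P := s.hom
    have hs' : s' ≫ π = 𝟙 X.obj := congrArg InducedCategory.Hom.hom hs
    have hse : Epi (s' ≫ π) := by rw [hs']; infer_instance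
    haveI : Epi s' := hess _ s' hse
    haveI : Mono s' := mono_of_mono_fac hs'
    haveI : IsIso s' := isIso_of_mono_of_epi _
    exact hrepl hP (asIso s').symm
  · intro hX
    haveI := hproj _ hX
    constructor
    intro E Z f e he
    haveI : Epi e.hom := epi_of_epi_in_pres J hsum hproj e.hom he
    obtain ⟨f', hf'⟩ :=
      Projective.factors f.hom e.hom
    exact ⟨ObjectProperty.homMk f', by apply ObjectProperty.hom_ext; exact hf'⟩

end
end

section
/- Let F : M^op → Vect_F be a J-presentable functor. Then for every u ∈ int M the sum over v ∈ (↑u) ∩ int(↓T(u)) of β⁰(F)(v) is finite; that is, the 0-th Betti function β⁰(F) : int M → ℕ, u ↦ dim_F Nat(F, S_u), is an admissible Betti function. -/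
open CategoryTheory CategoryTheory.Limits Opposite

noncomputable section

section Functors

open Strip

variable (a b : ℝ) (K : Type) [Field K]

attribute [local instance] Classical.propDecidable

variable {a b K}

variable (a b K)

end Functors

section More

open Strip DirectSum

variable (a b : ℝ) (K : Type) [Field K]

attribute [local instance] Classical.propDecidable

end More

end

section AuxAll
open CategoryTheory CategoryTheory.Limits Opposite
open Strip

section Aux
variable {a b : ℝ} {K : Type} [Field K]

lemma seqMap_trans (G : (Strip a b)ᵒᵖ ⥤ ModuleCat K) {x y z : Strip a b}
    (h1 : x ≤ y) (h2 : y ≤ z) (w : G.obj (op z)) :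
    seqMap G (h1.trans h2) w = seqMap G h1 (seqMap G h2 w) := by
  show (G.map (homOfLE (h1.trans h2)).op) w = (G.map (homOfLE h2).op ≫ G.map (homOfLE h1).op) w
  rw [← G.map_comp, ← op_comp]
  rfl

lemma exact_pt_congr {P : (Strip a b)ᵒᵖ ⥤ ModuleCat K} {x x' y y' z z' : Strip a b}
    (ex : x = x') (ey : y = y') (ez : z = z')
    {h1 : x ≤ y} {h1' : x' ≤ y'} {h2 : y ≤ z} {h2' : y' ≤ z'}
    (hE : Function.Exact (seqMap P h2) (seqMap P h1)) :
    Function.Exact (seqMap P h2') (seqMap P h1') := by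
  subst ex; subst ey; subst ez; exact hE

instance (p : Prop) : Subsingleton (PLift p) := ⟨fun x y => by cases x; cases y; rfl⟩

lemma phi_kills {P : (Strip a b)ᵒᵖ ⥤ ModuleCat K} {v : Strip a b}
    (η : P ⟶ SimpleF a b K v) {w : Strip a b} (hvw : v ≤ w) (hne : w ≠ v)
    (z : P.obj (op w)) :
    η.app (op v) (seqMap P hvw z) ⟨rfl⟩ = 0 := by
  have hnat := η.naturality (homOfLE hvw).op
  have hz : η.app (op v) (seqMap P hvw z) = (SimpleF a b K v).map (homOfLE hvw).op (η.app (op w) z) := by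
    have := congrArg (fun f => (f : P.obj (op w) ⟶ (SimpleF a b K v).obj (op v))  z) hnat
    exact this
  rw [hz]
  show condMap a b K (fun u => u = v) v w (η.app (op w) z) ⟨rfl⟩ = 0
  exact dif_neg hne

end Aux

section ExactLemmas
variable {a b : ℝ} {K : Type} [Field K] {P : (Strip a b)ᵒᵖ ⥤ ModuleCat K}

lemma pow1_symm_apply (x : Strip a b) :
    (glideEquiv ^ (1:ℤ) : Strip a b ≃o Strip a b) (glideEquiv.symm x) = x :=
  glideEquiv.apply_symm_apply x

lemma E2c (hcoh : Cohomological a b K P) {X Y W : Strip a b}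
    (hyy : Y.1.2 = X.1.2) (hW : W.1 = (Y.1.1, b - X.1.1))
    (h1 : X ≤ Y) (h2 : Y ≤ W) :
    Function.Exact (seqMap P h2) (seqMap P h1) := by
  have rect : IsCohomRect a b X Y W :=
    ⟨h1, h2, Or.inr ⟨by rw [hW], hyy, by rw [hW]; ring⟩⟩
  exact exact_pt_congr rfl rfl rfl (hcoh.2 X Y W rect 0).2.1

lemma E3c (hcoh : Cohomological a b K P) {X Y Z : Strip a b}
    (hyy : Y.1.2 = X.1.2) (hZ : Z.1 = (X.1.1, a - Y.1.1))
    (h1 : X ≤ Y) (h2 : Z ≤ X) :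
    Function.Exact (seqMap P h1) (seqMap P h2) := by
  obtain ⟨hX1, hX2⟩ := X.2
  obtain ⟨hY1, hY2⟩ := Y.2
  obtain ⟨h11, h12⟩ := le_def.mp h1
  have hW : a ≤ Y.1.1 + (b - X.1.1) ∧ Y.1.1 + (b - X.1.1) ≤ b := by
    constructor <;> linarith
  set W : Strip a b := ⟨(Y.1.1, b - X.1.1), hW⟩ with hWdef
  have h2' : Y ≤ W := le_def.mpr ⟨le_of_eq rfl, by show Y.1.2 ≤ b - X.1.1; linarith⟩
  have rect : IsCohomRect a b X Y W :=
    ⟨h1, h2', Or.inr ⟨rfl, hyy, by show X.1.1 + (b - X.1.1) = b; ring⟩⟩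
  have eZ : (glideEquiv ^ (0:ℤ) : Strip a b ≃o Strip a b) (glideEquiv.symm W) = Z := by
    apply Subtype.ext
    show (glideEquiv.symm W).1 = Z.1
    rw [glideEquiv_symm_coords, hZ]
    show (b - (b - X.1.1), a - Y.1.1) = (X.1.1, a - Y.1.1)
    congr 1
    ring
  exact exact_pt_congr eZ rfl rfl (hcoh.2 X Y W rect 0).2.2

lemma V3c (hcoh : Cohomological a b K P) {X Y Z : Strip a b}
    (hxx : Y.1.1 = X.1.1) (hZ : Z.1 = (b - Y.1.2, X.1.2))
    (h1 : X ≤ Y) (h2 : Z ≤ X) :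
    Function.Exact (seqMap P h1) (seqMap P h2) := by
  obtain ⟨hX1, hX2⟩ := X.2
  obtain ⟨hY1, hY2⟩ := Y.2
  obtain ⟨h11, h12⟩ := le_def.mp h1
  have hu0 := glideEquiv_symm_coords (a := a) (b := b) X
  have hv0 := glideEquiv_symm_coords (a := a) (b := b) Y
  have hu01 : (glideEquiv.symm X).1.1 = b - X.1.2 := by rw [hu0]
  have hu02 : (glideEquiv.symm X).1.2 = a - X.1.1 := by rw [hu0]
  have hv01 : (glideEquiv.symm Y).1.1 = b - Y.1.2 := by rw [hv0]
  have hv02 : (glideEquiv.symm Y).1.2 = a - Y.1.1 := by rw [hv0]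
  have hZ1 : Z.1.1 = b - Y.1.2 := by rw [hZ]
  have hZ2 : Z.1.2 = X.1.2 := by rw [hZ]
  have rect : IsCohomRect a b (glideEquiv.symm X) (glideEquiv.symm Y) Z := by
    refine ⟨glideEquiv.symm.monotone h1, le_def.mpr ⟨?_, ?_⟩, Or.inr ⟨?_, ?_, ?_⟩⟩
    · rw [hZ1, hv01]
    · rw [hv02, hZ2]; linarith
    · rw [hv01, hZ1]
    · rw [hv02, hu02, hxx]
    · rw [hu01, hZ2]; ring
  have e1 : (glideEquiv ^ (1:ℤ) : Strip a b ≃o Strip a b) (glideEquiv.symm Y) = Y :=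
    pow1_symm_apply Y
  have e2 : (glideEquiv ^ (1:ℤ) : Strip a b ≃o Strip a b) (glideEquiv.symm X) = X :=
    pow1_symm_apply X
  have e3 : (glideEquiv ^ (1:ℤ) : Strip a b ≃o Strip a b) (glideEquiv.symm Z) = Z :=
    pow1_symm_apply Z
  exact exact_pt_congr e3 e2 e1 (hcoh.2 _ _ _ rect 1).2.2

lemma V2c (hcoh : Cohomological a b K P) {X Y G' : Strip a b}
    (hxx : Y.1.1 = X.1.1) (hG : G'.1 = (a - X.1.2, Y.1.2))
    (h1 : X ≤ Y) (h2 : Y ≤ G') :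
    Function.Exact (seqMap P h2) (seqMap P h1) := by
  obtain ⟨hX1, hX2⟩ := X.2
  obtain ⟨hY1, hY2⟩ := Y.2
  have hu0 := glideEquiv_symm_coords (a := a) (b := b) X
  have hv0 := glideEquiv_symm_coords (a := a) (b := b) Y
  have hw0 := glideEquiv_symm_coords (a := a) (b := b) G'
  have hG1 : G'.1.1 = a - X.1.2 := by rw [hG]
  have hG2 : G'.1.2 = Y.1.2 := by rw [hG]
  have rect : IsCohomRect a b (glideEquiv.symm X) (glideEquiv.symm Y) (glideEquiv.symm G') := by
    refine ⟨glideEquiv.symm.monotone h1, glideEquiv.symm.monotone h2, Or.inr ⟨?_, ?_, ?_⟩⟩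
    · rw [show (glideEquiv.symm Y).1.1 = b - Y.1.2 from by rw [hv0],
        show (glideEquiv.symm G').1.1 = b - G'.1.2 from by rw [hw0], hG2]
    · rw [show (glideEquiv.symm Y).1.2 = a - Y.1.1 from by rw [hv0],
        show (glideEquiv.symm X).1.2 = a - X.1.1 from by rw [hu0], hxx]
    · rw [show (glideEquiv.symm X).1.1 = b - X.1.2 from by rw [hu0],
        show (glideEquiv.symm G').1.2 = a - G'.1.1 from by rw [hw0], hG1]
      ring
  exact exact_pt_congr (pow1_symm_apply X) (pow1_symm_apply Y) (pow1_symm_apply G')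
    (hcoh.2 _ _ _ rect 1).2.1

end ExactLemmas

section Jump
variable {a b : ℝ} {K : Type} [Field K] {P : (Strip a b)ᵒᵖ ⥤ ModuleCat K}

lemma exists_xi {v : Strip a b} (η : P ⟶ SimpleF a b K v) (hη : η.app (op v) ≠ 0) :
    ∃ ξ, η.app (op v) ξ ⟨rfl⟩ ≠ 0 := by
  by_contra hc
  push_neg at hc
  apply hη
  apply ModuleCat.hom_ext
  apply LinearMap.ext
  intro ξ
  funext pt
  rw [Subsingleton.elim pt ⟨rfl⟩]
  exact hc ξ

lemma jump_x (hcoh : Cohomological a b K P) {u v : Strip a b} (hbc : BlockCond v u)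
    (η : P ⟶ SimpleF a b K v) (hη : η.app (op v) ≠ 0)
    (s' : ℝ) (hs1 : a - u.1.2 < s') (hs2 : s' < v.1.1)
    {Z Z' : Strip a b} (hZc : Z.1 = (v.1.1, u.1.2)) (hZc' : Z'.1 = (s', u.1.2))
    (h1 : u ≤ Z) (h2 : u ≤ Z') :
    LinearMap.range (seqMap P h1).hom ≠ LinearMap.range (seqMap P h2).hom := by
  intro heq
  obtain ⟨hu1, hu2⟩ := u.2
  obtain ⟨hv1, hv2⟩ := v.2
  obtain ⟨hb1, hb2, hb3⟩ := hbc
  obtain ⟨hb11, hb12⟩ := le_def.mp hb1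
  obtain ⟨ξ, hξne⟩ := exists_xi η hη
  have hZ1 : Z.1.1 = v.1.1 := by rw [hZc]
  have hZ2 : Z.1.2 = u.1.2 := by rw [hZc]
  have hZ'1 : Z'.1.1 = s' := by rw [hZc']
  have hZ'2 : Z'.1.2 = u.1.2 := by rw [hZc']
  set m : Strip a b := ⟨(v.1.1, a - s'), by constructor <;> dsimp <;> linarith⟩ with hmdef
  set gB : Strip a b := ⟨(v.1.1, b - u.1.1), by constructor <;> dsimp <;> linarith⟩ with hgBdef
  set vC : Strip a b := ⟨(s', v.1.2), by constructor <;> dsimp <;> linarith⟩ with hvCdef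
  set nA : Strip a b := ⟨(u.1.1, a - s'), by constructor <;> dsimp <;> linarith⟩ with hnAdef
  have hZv : Z ≤ v := le_def.mpr ⟨le_of_eq hZ1.symm, by rw [hZ2]; exact hb12⟩
  have hnAu : nA ≤ u := le_def.mpr ⟨by show u.1.1 ≤ u.1.1; linarith,
    by show a - s' ≤ u.1.2; linarith⟩
  have hmv : m ≤ v := le_def.mpr ⟨by show v.1.1 ≤ v.1.1; linarith,
    by show a - s' ≤ v.1.2; linarith⟩
  have hnAm : nA ≤ m := le_def.mpr ⟨by show v.1.1 ≤ u.1.1; linarith,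
    by show a - s' ≤ a - s'; linarith⟩
  have hmgB : m ≤ gB := le_def.mpr ⟨by show v.1.1 ≤ v.1.1; linarith,
    by show a - s' ≤ b - u.1.1; linarith⟩
  have hvgB : v ≤ gB := le_def.mpr ⟨by show v.1.1 ≤ v.1.1; linarith,
    by show v.1.2 ≤ b - u.1.1; linarith⟩
  have hvvC : v ≤ vC := le_def.mpr ⟨by show s' ≤ v.1.1; linarith,
    by show v.1.2 ≤ v.1.2; linarith⟩
  have hexA : Function.Exact (seqMap P h2) (seqMap P hnAu) := by
    refine E3c hcoh hZ'2 ?_ h2 hnAu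
    rw [hZ'1]
  have hxmem : seqMap P h1 (seqMap P hZv ξ) ∈ Set.range (seqMap P h2) := by
    have hmem : seqMap P h1 (seqMap P hZv ξ) ∈ LinearMap.range (seqMap P h1).hom :=
      ⟨seqMap P hZv ξ, rfl⟩
    rw [heq] at hmem
    obtain ⟨y, hy⟩ := hmem
    exact ⟨y, hy⟩
  have hs0 : seqMap P hnAu (seqMap P h1 (seqMap P hZv ξ)) = 0 :=
    (hexA _).mpr hxmem
  have hs0' : seqMap P hnAm (seqMap P hmv ξ) = 0 := by
    rw [← seqMap_trans, ← seqMap_trans] at hs0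
    rw [← seqMap_trans]
    exact hs0
  have hexB : Function.Exact (seqMap P hmgB) (seqMap P hnAm) :=
    E2c (X := nA) (Y := m) (W := gB) hcoh rfl rfl hnAm hmgB
  obtain ⟨ζ, hζ⟩ := (hexB _).mp hs0'
  have hgBne : gB ≠ v := by
    intro hcon
    have h' : gB.1.2 = v.1.2 := by rw [hcon]
    have h'' : b - u.1.1 = v.1.2 := h'
    linarith
  have hsub : seqMap P hmv (ξ - seqMap P hvgB ζ) = 0 := by
    rw [map_sub, ← seqMap_trans, hζ, sub_self]
  have hexC : Function.Exact (seqMap P hvvC) (seqMap P hmv) :=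
    E3c (X := v) (Y := vC) (Z := m) hcoh rfl rfl hvvC hmv
  obtain ⟨ρ, hρ⟩ := (hexC _).mp hsub
  have hvCne : vC ≠ v := by
    intro hcon
    have h' : vC.1.1 = v.1.1 := by rw [hcon]
    have h'' : s' = v.1.1 := h'
    linarith
  have h01 : η.app (op v) (seqMap P hvgB ζ) ⟨rfl⟩ = 0 := phi_kills η hvgB hgBne ζ
  have h02 : η.app (op v) (ξ - seqMap P hvgB ζ) ⟨rfl⟩ = 0 := by
    rw [← hρ]; exact phi_kills η hvvC hvCne ρ
  apply hξne
  have hsplit : η.app (op v) ξ =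
      η.app (op v) (ξ - seqMap P hvgB ζ) + η.app (op v) (seqMap P hvgB ζ) := by
    rw [← map_add]
    congr 1
    abel
  rw [hsplit]
  show η.app (op v) (ξ - seqMap P hvgB ζ) ⟨rfl⟩ + η.app (op v) (seqMap P hvgB ζ) ⟨rfl⟩ = 0
  rw [h01, h02, add_zero]

lemma jump_y (hcoh : Cohomological a b K P) {u v : Strip a b} (hbc : BlockCond v u)
    (η : P ⟶ SimpleF a b K v) (hη : η.app (op v) ≠ 0)
    (t' : ℝ) (ht1 : v.1.2 < t') (ht2 : t' < b - u.1.1)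
    {Z Z' : Strip a b} (hZc : Z.1 = (u.1.1, v.1.2)) (hZc' : Z'.1 = (u.1.1, t'))
    (h1 : u ≤ Z) (h2 : u ≤ Z') :
    LinearMap.range (seqMap P h1).hom ≠ LinearMap.range (seqMap P h2).hom := by
  intro heq
  obtain ⟨hu1, hu2⟩ := u.2
  obtain ⟨hv1, hv2⟩ := v.2
  obtain ⟨hb1, hb2, hb3⟩ := hbc
  obtain ⟨hb11, hb12⟩ := le_def.mp hb1
  obtain ⟨ξ, hξne⟩ := exists_xi η hη
  have hZ1 : Z.1.1 = u.1.1 := by rw [hZc]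
  have hZ2 : Z.1.2 = v.1.2 := by rw [hZc]
  have hZ'1 : Z'.1.1 = u.1.1 := by rw [hZc']
  have hZ'2 : Z'.1.2 = t' := by rw [hZc']
  set nV : Strip a b := ⟨(b - t', u.1.2), by constructor <;> dsimp <;> linarith⟩ with hnVdef
  set m' : Strip a b := ⟨(b - t', v.1.2), by constructor <;> dsimp <;> linarith⟩ with hm'def
  set g' : Strip a b := ⟨(a - u.1.2, v.1.2), by constructor <;> dsimp <;> linarith⟩ with hg'def
  set vV : Strip a b := ⟨(v.1.1, t'), by constructor <;> dsimp <;> linarith⟩ with hvVdef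
  have hZv : Z ≤ v := le_def.mpr ⟨by rw [hZ1]; exact hb11, le_of_eq hZ2⟩
  have hnVu : nV ≤ u := le_def.mpr ⟨by show u.1.1 ≤ b - t'; linarith,
    by show u.1.2 ≤ u.1.2; linarith⟩
  have hm'v : m' ≤ v := le_def.mpr ⟨by show v.1.1 ≤ b - t'; linarith,
    by show v.1.2 ≤ v.1.2; linarith⟩
  have hnVm' : nV ≤ m' := le_def.mpr ⟨by show b - t' ≤ b - t'; linarith,
    by show u.1.2 ≤ v.1.2; linarith⟩
  have hm'g' : m' ≤ g' := le_def.mpr ⟨by show a - u.1.2 ≤ b - t'; linarith,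
    by show v.1.2 ≤ v.1.2; linarith⟩
  have hvg' : v ≤ g' := le_def.mpr ⟨by show a - u.1.2 ≤ v.1.1; linarith,
    by show v.1.2 ≤ v.1.2; linarith⟩
  have hvvV : v ≤ vV := le_def.mpr ⟨by show v.1.1 ≤ v.1.1; linarith,
    by show v.1.2 ≤ t'; linarith⟩
  have hexA : Function.Exact (seqMap P h2) (seqMap P hnVu) := by
    refine V3c (X := u) (Y := Z') (Z := nV) hcoh hZ'1 ?_ h2 hnVu
    rw [hZ'2]
  have hxmem : seqMap P h1 (seqMap P hZv ξ) ∈ Set.range (seqMap P h2) := by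
    have hmem : seqMap P h1 (seqMap P hZv ξ) ∈ LinearMap.range (seqMap P h1).hom :=
      ⟨seqMap P hZv ξ, rfl⟩
    rw [heq] at hmem
    obtain ⟨y, hy⟩ := hmem
    exact ⟨y, hy⟩
  have hs0 : seqMap P hnVu (seqMap P h1 (seqMap P hZv ξ)) = 0 :=
    (hexA _).mpr hxmem
  have hs0' : seqMap P hnVm' (seqMap P hm'v ξ) = 0 := by
    rw [← seqMap_trans, ← seqMap_trans] at hs0
    rw [← seqMap_trans]
    exact hs0
  have hexB : Function.Exact (seqMap P hm'g') (seqMap P hnVm') :=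
    V2c (X := nV) (Y := m') (G' := g') hcoh rfl rfl hnVm' hm'g'
  obtain ⟨ζ, hζ⟩ := (hexB _).mp hs0'
  have hg'ne : g' ≠ v := by
    intro hcon
    have h' : g'.1.1 = v.1.1 := by rw [hcon]
    have h'' : a - u.1.2 = v.1.1 := h'
    linarith
  have hsub : seqMap P hm'v (ξ - seqMap P hvg' ζ) = 0 := by
    rw [map_sub, ← seqMap_trans, hζ, sub_self]
  have hexC : Function.Exact (seqMap P hvvV) (seqMap P hm'v) :=
    V3c (X := v) (Y := vV) (Z := m') hcoh rfl rfl hvvV hm'v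
  obtain ⟨ρ, hρ⟩ := (hexC _).mp hsub
  have hvVne : vV ≠ v := by
    intro hcon
    have h' : vV.1.2 = v.1.2 := by rw [hcon]
    have h'' : t' = v.1.2 := h'
    linarith
  have h01 : η.app (op v) (seqMap P hvg' ζ) ⟨rfl⟩ = 0 := phi_kills η hvg' hg'ne ζ
  have h02 : η.app (op v) (ξ - seqMap P hvg' ζ) ⟨rfl⟩ = 0 := by
    rw [← hρ]; exact phi_kills η hvvV hvVne ρ
  apply hξne
  have hsplit : η.app (op v) ξ =
      η.app (op v) (ξ - seqMap P hvg' ζ) + η.app (op v) (seqMap P hvg' ζ) := by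
    rw [← map_add]
    congr 1
    abel
  rw [hsplit]
  show η.app (op v) (ξ - seqMap P hvg' ζ) ⟨rfl⟩ + η.app (op v) (seqMap P hvg' ζ) ⟨rfl⟩ = 0
  rw [h01, h02, add_zero]

end Jump

section Assemble
variable {a b : ℝ} {K : Type} [Field K]

lemma simple_obj_subsingleton {v : Strip a b} {u₀ : (Strip a b)ᵒᵖ} (h : u₀.unop ≠ v) :
    Subsingleton ((SimpleF a b K v).obj u₀) := by
  constructor
  intro x y
  have hx : ∀ z : (SimpleF a b K v).obj u₀, ∀ pt : PLift (u₀.unop = v), False :=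
    fun z pt => h pt.down
  funext pt
  exact absurd pt.down h

lemma get_eta {G : (Strip a b)ᵒᵖ ⥤ ModuleCat K} {v : Strip a b}
    (hne : beta0 a b K G v ≠ 0) :
    ∃ η : G ⟶ SimpleF a b K v, η.app (op v) ≠ 0 := by
  by_contra hc
  push_neg at hc
  apply hne
  have hsub : Subsingleton (G ⟶ SimpleF a b K v) := by
    constructor
    intro η η'
    apply NatTrans.ext
    funext u₀
    by_cases h : u₀.unop = v
    · have : u₀ = op v := by rw [← h]
      subst this
      rw [hc η, hc η']
    · haveI := simple_obj_subsingleton (K := K) h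
      apply ModuleCat.hom_ext
      apply LinearMap.ext
      intro x
      exact Subsingleton.elim _ _
  have h0 : Module.finrank K (G ⟶ SimpleF a b K v) = 0 :=
    Module.finrank_zero_of_subsingleton
  unfold beta0
  split_ifs <;> simp [h0]

end Assemble

section Assemble2
variable {a b : ℝ} {K : Type} [Field K]

lemma range_mono (P : (Strip a b)ᵒᵖ ⥤ ModuleCat K) {x y z : Strip a b}
    (h1 : x ≤ y) (h2 : y ≤ z) (h3 : x ≤ z) :
    LinearMap.range (seqMap P h3).hom ≤ LinearMap.range (seqMap P h1).hom := by
  rintro w ⟨ζ, hζ⟩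
  refine ⟨seqMap P h2 ζ, ?_⟩
  exact (seqMap_trans P h1 h2 ζ).symm.trans hζ

lemma zx_mem {u v : Strip a b} (h : BlockCond v u) :
    a ≤ v.1.1 + u.1.2 ∧ v.1.1 + u.1.2 ≤ b := by
  obtain ⟨h1, h2, h3⟩ := h
  obtain ⟨h4, h5⟩ := le_def.mp h1
  obtain ⟨hu1, hu2⟩ := u.2
  constructor <;> linarith

lemma zy_mem {u v : Strip a b} (h : BlockCond v u) :
    a ≤ u.1.1 + v.1.2 ∧ u.1.1 + v.1.2 ≤ b := by
  obtain ⟨h1, h2, h3⟩ := h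
  obtain ⟨h4, h5⟩ := le_def.mp h1
  obtain ⟨hu1, hu2⟩ := u.2
  constructor <;> linarith

lemma le_zx {u v : Strip a b} (h : BlockCond v u) :
    u ≤ (⟨(v.1.1, u.1.2), zx_mem h⟩ : Strip a b) :=
  le_def.mpr ⟨(le_def.mp h.1).1, le_rfl⟩

lemma le_zy {u v : Strip a b} (h : BlockCond v u) :
    u ≤ (⟨(u.1.1, v.1.2), zy_mem h⟩ : Strip a b) :=
  le_def.mpr ⟨le_rfl, (le_def.mp h.1).2⟩

end Assemble2

end AuxAll

open Strip in
/-- the 0-th Betti function of a `𝒥`-presentable functor is an admissible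
Betti function. -/
theorem beta0_admissible_of_presentable (a b : ℝ) (K : Type) [Field K]
    (G : (Strip a b)ᵒᵖ ⥤ ModuleCat K) (hG : JPresentable a b K G) :
    AdmissibleBetti a b (beta0 a b K G) := by
  classical
  obtain ⟨H, P, hH, hP, f, g, hexact, hsurj⟩ := hG
  obtain ⟨hpfd, hcoh, hseq, hbdd⟩ := hP
  have etaP : ∀ v : Strip a b, beta0 a b K G v ≠ 0 →
      ∃ η : P ⟶ SimpleF a b K v, η.app (op v) ≠ 0 := by
    intro v hv
    obtain ⟨η, hη⟩ := get_eta hv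
    obtain ⟨ξ, hξ⟩ := exists_xi η hη
    obtain ⟨y, hy⟩ := hsurj (op v) ξ
    refine ⟨g ≫ η, fun h0 => ?_⟩
    apply hξ
    have h1 : η.app (op v) (g.app (op v) y) = 0 := by
      have h2 := congrArg
        (fun (φ : P.obj (op v) ⟶ (SimpleF a b K v).obj (op v)) => φ y) h0
      simpa using h2
    rw [← hy, h1]
    rfl
  refine ⟨?_, ?_, ?_⟩
  · intro v hv
    unfold beta0
    rw [if_neg hv]
  · obtain ⟨c, hc⟩ := hbdd
    refine ⟨c, fun v hv => ?_⟩
    by_contra hne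
    obtain ⟨η, hη⟩ := etaP v hne
    obtain ⟨ξ, hξ⟩ := exists_xi η hη
    apply hξ
    rw [hc v hv ξ, map_zero]
    rfl
  · intro u
    haveI : FiniteDimensional K (P.obj (op u)) := hpfd u
    set N := Module.finrank K (P.obj (op u)) with hN
    set ν : Strip a b → ℕ × ℕ := fun v =>
      if h : BlockCond v u then
        (Module.finrank K (LinearMap.range (seqMap P (le_zx h)).hom),
         Module.finrank K (LinearMap.range (seqMap P (le_zy h)).hom))
      else (0, 0) with hνdef
    apply Set.Finite.of_finite_image (f := ν)
    · refine Set.Finite.subset ((Set.finite_Iic N).prod (Set.finite_Iic N)) ?_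
      rintro _ ⟨v, hv, rfl⟩
      rw [Set.mem_prod]
      rw [hνdef]
      simp only []
      rw [dif_pos hv.1]
      exact ⟨Submodule.finrank_le _, Submodule.finrank_le _⟩
    · intro v hv v' hv' hνeq
      obtain ⟨hb, hβ⟩ := hv
      obtain ⟨hb', hβ'⟩ := hv'
      rw [hνdef] at hνeq
      simp only [] at hνeq
      rw [dif_pos hb, dif_pos hb'] at hνeq
      rw [Prod.mk.injEq] at hνeq
      have hbb := hb
      have hbb' := hb'
      obtain ⟨hb1, hb2, hb3⟩ := hbb
      obtain ⟨hb11, hb12⟩ := le_def.mp hb1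
      obtain ⟨hb1', hb2', hb3'⟩ := hbb'
      obtain ⟨hb11', hb12'⟩ := le_def.mp hb1'
      have hx : v.1.1 = v'.1.1 := by
        rcases lt_trichotomy v.1.1 v'.1.1 with hlt | heqx | hgt
        · exfalso
          obtain ⟨η', hη'⟩ := etaP v' hβ'
          have hjump := jump_x hcoh hb' η' hη' v.1.1 (by linarith) hlt
            (Z := ⟨(v'.1.1, u.1.2), zx_mem hb'⟩) (Z' := ⟨(v.1.1, u.1.2), zx_mem hb⟩)
            rfl rfl (le_zx hb') (le_zx hb)
          have hzz := (le_def (p := ⟨(v'.1.1, u.1.2), zx_mem hb'⟩)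
            (q := ⟨(v.1.1, u.1.2), zx_mem hb⟩)).mpr
            ⟨by show v.1.1 ≤ v'.1.1; linarith, le_rfl⟩
          have hmono := range_mono P (le_zx hb') hzz (le_zx hb)
          have hstrict := Submodule.finrank_lt_finrank_of_lt
            (lt_of_le_of_ne hmono (fun e => hjump e.symm))
          rw [hνeq.1] at hstrict
          exact lt_irrefl _ hstrict
        · exact heqx
        · exfalso
          obtain ⟨η, hη⟩ := etaP v hβ
          have hjump := jump_x hcoh hb η hη v'.1.1 (by linarith) hgt
            (Z := ⟨(v.1.1, u.1.2), zx_mem hb⟩) (Z' := ⟨(v'.1.1, u.1.2), zx_mem hb'⟩)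
            rfl rfl (le_zx hb) (le_zx hb')
          have hzz := (le_def (p := ⟨(v.1.1, u.1.2), zx_mem hb⟩)
            (q := ⟨(v'.1.1, u.1.2), zx_mem hb'⟩)).mpr
            ⟨by show v'.1.1 ≤ v.1.1; linarith, le_rfl⟩
          have hmono := range_mono P (le_zx hb) hzz (le_zx hb')
          have hstrict := Submodule.finrank_lt_finrank_of_lt
            (lt_of_le_of_ne hmono (fun e => hjump e.symm))
          rw [hνeq.1] at hstrict
          exact lt_irrefl _ hstrict
      have hy : v.1.2 = v'.1.2 := by
        rcases lt_trichotomy v.1.2 v'.1.2 with hlt | heqy | hgt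
        · exfalso
          obtain ⟨η, hη⟩ := etaP v hβ
          have hjump := jump_y hcoh hb η hη v'.1.2 hlt (by linarith)
            (Z := ⟨(u.1.1, v.1.2), zy_mem hb⟩) (Z' := ⟨(u.1.1, v'.1.2), zy_mem hb'⟩)
            rfl rfl (le_zy hb) (le_zy hb')
          have hzz := (le_def (p := ⟨(u.1.1, v.1.2), zy_mem hb⟩)
            (q := ⟨(u.1.1, v'.1.2), zy_mem hb'⟩)).mpr
            ⟨le_rfl, by show v.1.2 ≤ v'.1.2; linarith⟩
          have hmono := range_mono P (le_zy hb) hzz (le_zy hb')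
          have hstrict := Submodule.finrank_lt_finrank_of_lt
            (lt_of_le_of_ne hmono (fun e => hjump e.symm))
          rw [hνeq.2] at hstrict
          exact lt_irrefl _ hstrict
        · exact heqy
        · exfalso
          obtain ⟨η', hη'⟩ := etaP v' hβ'
          have hjump := jump_y hcoh hb' η' hη' v.1.2 hgt (by linarith)
            (Z := ⟨(u.1.1, v'.1.2), zy_mem hb'⟩) (Z' := ⟨(u.1.1, v.1.2), zy_mem hb⟩)
            rfl rfl (le_zy hb') (le_zy hb)
          have hzz := (le_def (p := ⟨(u.1.1, v'.1.2), zy_mem hb'⟩)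
            (q := ⟨(u.1.1, v.1.2), zy_mem hb⟩)).mpr
            ⟨le_rfl, by show v'.1.2 ≤ v.1.2; linarith⟩
          have hmono := range_mono P (le_zy hb') hzz (le_zy hb)
          have hstrict := Submodule.finrank_lt_finrank_of_lt
            (lt_of_le_of_ne hmono (fun e => hjump e.symm))
          rw [hνeq.2] at hstrict
          exact lt_irrefl _ hstrict
      exact Subtype.ext (Prod.ext hx hy)
end
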